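/- Let d ≥ 1, μ > 0, κ ∈ (0,1), and let ρ : ℝ^d → (0,∞) be twice continuously differentiable and u : ℝ^d → ℝ^d continuously differentiable. Define v = u + 2κμ∇log ρ and w = 2√(κ(1−κ)) μ ∇log ρ. Then pointwise: (i) A(v) = A(u); (ii) D(√(1−κ) v) − ∇(√κ w) = √(1−κ) D(u); and consequently (iii) κ|A(v)|² + |D(√(1−κ) v) − ∇(√κ w)|² = κ|A(u)|² + (1−κ)|D(u)|², where |M|² denotes the squared Frobenius norm of the matrix M. -/

import Mathlib

open Real MeasureTheory Set Filter

noncomputable section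

variable {d : ℕ}

/-- `i`-th partial derivative of a scalar function on `ℝᵈ`. -/
def sder (i : Fin d) (f : (Fin d → ℝ) → ℝ) (x : Fin d → ℝ) : ℝ :=
  fderiv ℝ f x (Pi.single i 1)

/-- Jacobian matrix of a vector field on `ℝᵈ`: `(∇u)_{ij} = ∂_j u_i`. -/
def sjac (u : (Fin d → ℝ) → Fin d → ℝ) (x : Fin d → ℝ) : Fin d → Fin d → ℝ :=
  fun i j => sder j (fun y => u y i) x

/-- Symmetric gradient `D(u) = (∇u + (∇u)ᵀ)/2` of a vector field on `ℝᵈ`. -/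
def sD (u : (Fin d → ℝ) → Fin d → ℝ) (x : Fin d → ℝ) : Fin d → Fin d → ℝ :=
  fun i j => (sjac u x i j + sjac u x j i) / 2

/-- Antisymmetric gradient `A(u) = (∇u - (∇u)ᵀ)/2` of a vector field on `ℝᵈ`. -/
def sA (u : (Fin d → ℝ) → Fin d → ℝ) (x : Fin d → ℝ) : Fin d → Fin d → ℝ :=
  fun i j => (sjac u x i j - sjac u x j i) / 2

/-- Time derivative `∂ₜ f` of a scalar function on `ℝ × ℝᵈ`. -/
def tder (f : ℝ × (Fin d → ℝ) → ℝ) (z : ℝ × (Fin d → ℝ)) : ℝ :=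
  fderiv ℝ f z (1, 0)

/-- `i`-th spatial partial derivative `∂ᵢ f` of a scalar function on `ℝ × ℝᵈ`. -/
def xder (i : Fin d) (f : ℝ × (Fin d → ℝ) → ℝ) (z : ℝ × (Fin d → ℝ)) : ℝ :=
  fderiv ℝ f z (0, Pi.single i 1)

/-- Spatial divergence of a (time-dependent) vector field. -/
def xdiv (u : ℝ × (Fin d → ℝ) → Fin d → ℝ) (z : ℝ × (Fin d → ℝ)) : ℝ :=
  ∑ i, xder i (fun y => u y i) z

/-- Spatial Jacobian matrix `(∇u)_{ij} = ∂_j u_i` of a (time-dependent) vector field. -/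
def xjac (u : ℝ × (Fin d → ℝ) → Fin d → ℝ) (z : ℝ × (Fin d → ℝ)) : Fin d → Fin d → ℝ :=
  fun i j => xder j (fun y => u y i) z

/-- Symmetric gradient `D(u) = (∇u + (∇u)ᵀ)/2` of a (time-dependent) vector field. -/
def xD (u : ℝ × (Fin d → ℝ) → Fin d → ℝ) (z : ℝ × (Fin d → ℝ)) : Fin d → Fin d → ℝ :=
  fun i j => (xjac u z i j + xjac u z j i) / 2

/-- Antisymmetric gradient `A(u) = (∇u - (∇u)ᵀ)/2` of a (time-dependent) vector field. -/
def xA (u : ℝ × (Fin d → ℝ) → Fin d → ℝ) (z : ℝ × (Fin d → ℝ)) : Fin d → Fin d → ℝ :=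
  fun i j => (xjac u z i j - xjac u z j i) / 2

/-- Divergence of a matrix field: `(div M)ᵢ = ∑ⱼ ∂ⱼ M_{ij}`. -/
def mdiv (M : ℝ × (Fin d → ℝ) → Fin d → Fin d → ℝ) (z : ℝ × (Fin d → ℝ)) : Fin d → ℝ :=
  fun i => ∑ j, xder j (fun y => M y i j) z

/-- Euclidean inner product on `ℝᵈ`. -/
def dotv (a b : Fin d → ℝ) : ℝ := ∑ i, a i * b i

/-- Frobenius inner product of `d × d` matrices. -/
def frob (M N : Fin d → Fin d → ℝ) : ℝ := ∑ i, ∑ j, M i j * N i j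

/-- The unit box `[0,1]ᵈ`. -/
def box (d : ℕ) : Set (Fin d → ℝ) := Set.univ.pi fun _ => Set.Icc (0 : ℝ) 1

/-- `ℤᵈ`-periodicity in the space variable for scalar functions on `ℝ × ℝᵈ`. -/
def PeriodicX (f : ℝ × (Fin d → ℝ) → ℝ) : Prop :=
  ∀ (t : ℝ) (x : Fin d → ℝ) (k : Fin d → ℤ), f (t, x + fun i => (k i : ℝ)) = f (t, x)

/-- Mass conservation equation `∂ₜ ρ + div (ρ u) = 0` at the point `z`. -/
def MassEq (ρ : ℝ × (Fin d → ℝ) → ℝ) (u : ℝ × (Fin d → ℝ) → Fin d → ℝ)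
    (z : ℝ × (Fin d → ℝ)) : Prop :=
  tder ρ z + xdiv (fun y j => ρ y * u y j) z = 0

/-- Momentum equation `∂ₜ(ρu) + div(ρ u ⊗ u) + ∇(a ρ^γ) - 2 μ div(ρ D(u)) = 0`
at the point `z`. -/
def MomEq (μ a γ : ℝ) (ρ : ℝ × (Fin d → ℝ) → ℝ) (u : ℝ × (Fin d → ℝ) → Fin d → ℝ)
    (z : ℝ × (Fin d → ℝ)) : Prop :=
  ∀ i, tder (fun y => ρ y * u y i) z
      + mdiv (fun y i j => ρ y * u y i * u y j) z i
      + xder i (fun y => a * ρ y ^ γ) z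
      - 2 * μ * mdiv (fun y i j => ρ y * xD u y i j) z i = 0

/-- Compressible Euler momentum equation `∂ₜ(ρu) + div(ρ u ⊗ u) + ∇(a ρ^γ) = 0`
at the point `z`. -/
def EulerMomEq (a γ : ℝ) (ρ : ℝ × (Fin d → ℝ) → ℝ) (u : ℝ × (Fin d → ℝ) → Fin d → ℝ)
    (z : ℝ × (Fin d → ℝ)) : Prop :=
  ∀ i, tder (fun y => ρ y * u y i) z
      + mdiv (fun y i j => ρ y * u y i * u y j) z i
      + xder i (fun y => a * ρ y ^ γ) z = 0


/-- Auxiliary: symmetry of the Hessian of `log ρ` (expressed via `∂ᵢρ/ρ`). -/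
theorem aux_hess_symm {d : ℕ} (ρ : (Fin d → ℝ) → ℝ) (hρpos : ∀ x, 0 < ρ x)
    (hρ : ContDiff ℝ 2 ρ) (x : Fin d → ℝ) (i j : Fin d) :
    fderiv ℝ (fun y => sder i ρ y / ρ y) x (Pi.single j 1)
      = fderiv ℝ (fun y => sder j ρ y / ρ y) x (Pi.single i 1) := by
  have hdρ : Differentiable ℝ ρ := hρ.differentiable two_ne_zero
  have hfd : Differentiable ℝ (fderiv ℝ ρ) :=
    (hρ.fderiv_right (m := 1) (by norm_num)).differentiable one_ne_zero
  have hd1 : ∀ k : Fin d, Differentiable ℝ (fun y => fderiv ℝ ρ y (Pi.single k 1)) :=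
    fun k => hfd.clm_apply (differentiable_const _)
  have hne : ∀ y, ρ y ≠ 0 := fun y => (hρpos y).ne'
  have h0 : ρ x ≠ 0 := hne x
  have hsym := (hρ.contDiffAt (x := x)).isSymmSndFDerivAt (by norm_num)
  have key : ∀ k l : Fin d,
      fderiv ℝ (fun y => sder k ρ y / ρ y) x (Pi.single l 1)
        = (fderiv ℝ (fderiv ℝ ρ) x (Pi.single l 1)) (Pi.single k 1) / ρ x
          - sder k ρ x * sder l ρ x / ρ x ^ 2 := by
    intro k l
    have h2 : fderiv ℝ (fun y => sder k ρ y) x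
        = (fderiv ℝ (fderiv ℝ ρ) x).flip (Pi.single k 1) := by
      have := fderiv_clm_apply (c := fderiv ℝ ρ) (u := fun _ => Pi.single k 1)
        (hfd x) (differentiableAt_const _)
      simpa [sder] using this
    have hDk : HasFDerivAt (fun y => sder k ρ y)
        ((fderiv ℝ (fderiv ℝ ρ) x).flip (Pi.single k 1)) x := h2 ▸ ((hd1 k) x).hasFDerivAt
    have hInv : HasFDerivAt (fun y => (ρ y)⁻¹)
        ((ContinuousLinearMap.smulRight (1 : ℝ →L[ℝ] ℝ) (-(ρ x ^ 2)⁻¹)).comp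
          (fderiv ℝ ρ x)) x :=
      (hasFDerivAt_inv h0).comp x (hdρ x).hasFDerivAt
    have hMul := hDk.fun_mul hInv
    have heq : (fun y => sder k ρ y / ρ y) = fun y => sder k ρ y * (ρ y)⁻¹ := by
      funext y; rw [div_eq_mul_inv]
    rw [heq, hMul.fderiv]
    simp [sder]
    field_simp
    ring
  rw [key i j, key j i, hsym]
  ring


/-- Auxiliary: pointwise derivative of a constant multiple. -/
theorem aux_fderiv_const_mul {d : ℕ} {g : (Fin d → ℝ) → ℝ} {x : Fin d → ℝ}
    (hg : DifferentiableAt ℝ g x) (c : ℝ) (z : Fin d → ℝ) :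
    fderiv ℝ (fun y => c * g y) x z = c * fderiv ℝ g x z := by
  rw [fderiv_const_mul hg]; simp

/-- Auxiliary: pointwise derivative of `f + c • g`. -/
theorem aux_fderiv_add_const_mul {d : ℕ} {f g : (Fin d → ℝ) → ℝ} {x : Fin d → ℝ}
    (hf : DifferentiableAt ℝ f x) (hg : DifferentiableAt ℝ g x) (c : ℝ) (z : Fin d → ℝ) :
    fderiv ℝ (fun y => f y + c * g y) x z = fderiv ℝ f x z + c * fderiv ℝ g x z := by
  rw [fderiv_fun_add hf (hg.const_mul c), fderiv_const_mul hg]; simp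

/-- With `v = u + 2κμ∇log ρ` and `w = 2√(κ(1−κ)) μ ∇log ρ`:
(i) `A(v) = A(u)`;
(ii) `D(√(1−κ) v) − ∇(√κ w) = √(1−κ) D(u)`;
(iii) `κ|A(v)|² + |D(√(1−κ) v) − ∇(√κ w)|² = κ|A(u)|² + (1−κ)|D(u)|²`
(squared Frobenius norms). -/
theorem kappa_entropy_dissipation_identity
    {d : ℕ} (hd : 1 ≤ d) (μ κ : ℝ) (hμ : 0 < μ) (hκ : κ ∈ Set.Ioo (0 : ℝ) 1)
    (ρ : (Fin d → ℝ) → ℝ) (u : (Fin d → ℝ) → Fin d → ℝ)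
    (hρpos : ∀ x, 0 < ρ x) (hρ : ContDiff ℝ 2 ρ) (hu : ContDiff ℝ 1 u)
    (v w : (Fin d → ℝ) → Fin d → ℝ)
    (hv : v = fun x i => u x i + 2 * κ * μ * (sder i ρ x / ρ x))
    (hw : w = fun x i => 2 * Real.sqrt (κ * (1 - κ)) * μ * (sder i ρ x / ρ x))
    (x : Fin d → ℝ) :
    sA v x = sA u x ∧
    (∀ i j, sD (fun y i => Real.sqrt (1 - κ) * v y i) x i j
              - sjac (fun y i => Real.sqrt κ * w y i) x i j
            = Real.sqrt (1 - κ) * sD u x i j) ∧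
    κ * frob (sA v x) (sA v x)
      + frob (fun i j => sD (fun y i => Real.sqrt (1 - κ) * v y i) x i j
                - sjac (fun y i => Real.sqrt κ * w y i) x i j)
             (fun i j => sD (fun y i => Real.sqrt (1 - κ) * v y i) x i j
                - sjac (fun y i => Real.sqrt κ * w y i) x i j)
      = κ * frob (sA u x) (sA u x) + (1 - κ) * frob (sD u x) (sD u x) := by

  have hdρ : Differentiable ℝ ρ := hρ.differentiable two_ne_zero
  have hfd : Differentiable ℝ (fderiv ℝ ρ) :=
    (hρ.fderiv_right (m := 1) (by norm_num)).differentiable one_ne_zero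
  have hd1 : ∀ k : Fin d, Differentiable ℝ (fun y => fderiv ℝ ρ y (Pi.single k 1)) :=
    fun k => hfd.clm_apply (differentiable_const _)
  have hne : ∀ y, ρ y ≠ 0 := fun y => (hρpos y).ne'
  have hgd : ∀ k : Fin d, Differentiable ℝ (fun y => sder k ρ y / ρ y) := by
    intro k
    simpa [div_eq_mul_inv, sder] using (hd1 k).fun_mul (hdρ.fun_inv hne)
  have hdu : ∀ i, Differentiable ℝ (fun y => u y i) :=
    differentiable_pi.mp (hu.differentiable one_ne_zero)
  have hdv : ∀ i, Differentiable ℝ (fun y => v y i) := by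
    intro i; rw [hv]; exact (hdu i).add ((hgd i).const_mul _)
  have hdw : ∀ i, Differentiable ℝ (fun y => w y i) := by
    intro i; rw [hw]; exact (hgd i).const_mul _
  set H : Fin d → Fin d → ℝ :=
    fun i j => fderiv ℝ (fun y => sder i ρ y / ρ y) x (Pi.single j 1) with hH
  have hHsym : ∀ i j, H i j = H j i := fun i j => aux_hess_symm ρ hρpos hρ x i j
  have jac_v : ∀ i j, sjac v x i j = sjac u x i j + 2 * κ * μ * H i j := by
    intro i j
    show fderiv ℝ (fun y => v y i) x (Pi.single j 1) = _
    rw [show (fun y => v y i) = fun y => u y i + 2 * κ * μ * (sder i ρ y / ρ y) from by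
      rw [hv]]
    exact aux_fderiv_add_const_mul ((hdu i) x) ((hgd i) x) _ _
  have jac_sv : ∀ i j, sjac (fun y i => Real.sqrt (1 - κ) * v y i) x i j
      = Real.sqrt (1 - κ) * sjac v x i j := by
    intro i j
    show fderiv ℝ (fun y => Real.sqrt (1 - κ) * v y i) x (Pi.single j 1) = _
    exact aux_fderiv_const_mul ((hdv i) x) _ _
  have jac_sw : ∀ i j, sjac (fun y i => Real.sqrt κ * w y i) x i j
      = Real.sqrt κ * (2 * Real.sqrt (κ * (1 - κ)) * μ) * H i j := by
    intro i j
    show fderiv ℝ (fun y => Real.sqrt κ * w y i) x (Pi.single j 1) = _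
    rw [show (fun y => Real.sqrt κ * w y i)
        = fun y => (Real.sqrt κ * (2 * Real.sqrt (κ * (1 - κ)) * μ)) * (sder i ρ y / ρ y) from by
      funext y; simp only [hw]; ring]
    exact aux_fderiv_const_mul ((hgd i) x) _ _
  have hcoef : Real.sqrt (1 - κ) * (2 * κ * μ)
      = Real.sqrt κ * (2 * Real.sqrt (κ * (1 - κ)) * μ) := by
    have h1 : Real.sqrt κ * Real.sqrt (κ * (1 - κ)) = κ * Real.sqrt (1 - κ) := by
      rw [← Real.sqrt_mul hκ.1.le, show κ * (κ * (1 - κ)) = κ ^ 2 * (1 - κ) by ring,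
        Real.sqrt_mul (sq_nonneg κ), Real.sqrt_sq hκ.1.le]
    linear_combination (-2) * μ * h1
  have part1 : sA v x = sA u x := by
    funext i j
    simp only [sA, jac_v i j, jac_v j i, hHsym i j]
    ring
  have part2 : ∀ i j, sD (fun y i => Real.sqrt (1 - κ) * v y i) x i j
      - sjac (fun y i => Real.sqrt κ * w y i) x i j
      = Real.sqrt (1 - κ) * sD u x i j := by
    intro i j
    simp only [sD, jac_sv, jac_sw, jac_v, hHsym j i]
    linear_combination H i j * hcoef
  refine ⟨part1, part2, ?_⟩
  have hF : (fun i j => sD (fun y i => Real.sqrt (1 - κ) * v y i) x i j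
      - sjac (fun y i => Real.sqrt κ * w y i) x i j)
      = fun i j => Real.sqrt (1 - κ) * sD u x i j := by
    funext i j; exact part2 i j
  rw [part1, hF]
  have hs : Real.sqrt (1 - κ) * Real.sqrt (1 - κ) = 1 - κ :=
    Real.mul_self_sqrt (by linarith [hκ.2])
  have : frob (fun i j => Real.sqrt (1 - κ) * sD u x i j)
      (fun i j => Real.sqrt (1 - κ) * sD u x i j) = (1 - κ) * frob (sD u x) (sD u x) := by
    have h2 : ∀ a : ℝ, (Real.sqrt (1 - κ) * a) * (Real.sqrt (1 - κ) * a)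
        = (1 - κ) * (a * a) := fun a => by
      rw [show (Real.sqrt (1 - κ) * a) * (Real.sqrt (1 - κ) * a)
          = (Real.sqrt (1 - κ) * Real.sqrt (1 - κ)) * (a * a) from by ring, hs]
    simp only [frob, Finset.mul_sum]
    exact Finset.sum_congr rfl fun i _ => Finset.sum_congr rfl fun j _ => h2 _
  rw [this]
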